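/- Let G = (V,E) be a simple graph with a vertex cover W of size at most k, and suppose that no five distinct vertices of G have pairwise equal open neighborhoods. Then |V| ≤ k + 4·2^k and |E| ≤ 4k·2^k. -/

import Mathlib

open Finset

lemma sum_card_powerset' {V : Type*} [DecidableEq V] (s : Finset V) :
    ∑ S ∈ s.powerset, S.card = s.card * 2 ^ (s.card - 1) := by
  induction s using Finset.induction_on with
  | empty => simp
  | @insert a s ha ih =>
    rw [Finset.powerset_insert, Finset.sum_union, Finset.sum_image]
    · have h1 : ∑ S ∈ s.powerset, (insert a S).card
          = (∑ S ∈ s.powerset, S.card) + 2 ^ s.card := by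
        calc ∑ S ∈ s.powerset, (insert a S).card
            = ∑ S ∈ s.powerset, (S.card + 1) := by
              apply Finset.sum_congr rfl
              intro S hS
              rw [Finset.mem_powerset] at hS
              rw [Finset.card_insert_of_notMem (fun h => ha (hS h))]
          _ = (∑ S ∈ s.powerset, S.card) + 2 ^ s.card := by
              rw [Finset.sum_add_distrib, Finset.sum_const, smul_eq_mul, mul_one,
                Finset.card_powerset]
      rw [h1, ih, Finset.card_insert_of_notMem ha]
      cases hn : s.card with
      | zero => simp
      | succ n =>
        have h2 : n + 1 - 1 = n := rfl
        have h3 : n + 1 + 1 - 1 = n + 1 := rfl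
        rw [h2, h3, pow_succ]
        ring
    · intro S hS T hT hST
      rw [Finset.mem_coe, Finset.mem_powerset] at hS hT
      have : ∀ U : Finset V, U ⊆ s → (insert a U).erase a = U := by
        intro U hU
        rw [Finset.erase_insert_eq_erase, Finset.erase_eq_of_notMem (fun h => ha (hU h))]
      rw [← this S hS, ← this T hT, hST]
    · rw [Finset.disjoint_left]
      intro S hS hS'
      rw [Finset.mem_powerset] at hS
      rw [Finset.mem_image] at hS'
      obtain ⟨T, _, rfl⟩ := hS'
      exact ha (hS (Finset.mem_insert_self a T))

/-- A graph with a vertex cover of size at most k in which no five vertices have pairwise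
equal open neighborhoods has at most k + 4·2^k vertices and at most 4k·2^k edges. -/
theorem kernel_size_vertex_cover {V : Type*} [Fintype V] [DecidableEq V]
    (G : SimpleGraph V) [DecidableRel G.Adj] (k : ℕ) (W : Finset V)
    (hWcard : W.card ≤ k)
    (hvc : ∀ u w : V, G.Adj u w → u ∈ W ∨ w ∈ W)
    (htwins : ∀ s : Finset V,
      (∀ u ∈ s, ∀ w ∈ s, G.neighborSet u = G.neighborSet w) → s.card ≤ 4) :
    Fintype.card V ≤ k + 4 * 2 ^ k ∧ G.edgeFinset.card ≤ 4 * k * 2 ^ k := by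
  classical
  set f : V → Finset V := fun v => G.neighborFinset v with hf
  -- vertices outside W have all neighbors in W
  have hmaps : ∀ v ∈ Wᶜ, f v ∈ W.powerset := by
    intro v hv
    rw [Finset.mem_compl] at hv
    rw [Finset.mem_powerset]
    intro u hu
    rw [hf, SimpleGraph.mem_neighborFinset] at hu
    rcases hvc v u hu with h | h
    · exact absurd h hv
    · exact h
  -- fibers of f have at most 4 elements
  have hfiber : ∀ S : Finset V, (Wᶜ.filter (fun v => f v = S)).card ≤ 4 := by
    intro S
    apply htwins
    intro u hu w hw
    rw [Finset.mem_filter] at hu hw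
    exact Set.toFinset_inj.mp (hu.2.trans hw.2.symm)
  have hcompl : Wᶜ.card ≤ 4 * 2 ^ k := by
    calc Wᶜ.card ≤ 4 * W.powerset.card :=
          Finset.card_le_mul_card_image_of_maps_to hmaps 4 (fun S _ => hfiber S)
      _ = 4 * 2 ^ W.card := by rw [Finset.card_powerset]
      _ ≤ 4 * 2 ^ k := by
          exact Nat.mul_le_mul_left 4 (Nat.pow_le_pow_right (by norm_num) hWcard)
  have hV : Fintype.card V ≤ k + 4 * 2 ^ k := by
    have := Finset.card_add_card_compl W
    omega
  refine ⟨hV, ?_⟩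
  -- edge bound via handshake
  have hsum : ∑ v, G.degree v = 2 * G.edgeFinset.card :=
    SimpleGraph.sum_degrees_eq_twice_card_edges G
  -- split sum over W and Wᶜ
  have hsplit : ∑ v, G.degree v = ∑ v ∈ W, G.degree v + ∑ v ∈ Wᶜ, G.degree v := by
    rw [← Finset.sum_add_sum_compl W]
  -- bound on sum over W
  have hW : ∑ v ∈ W, G.degree v ≤ k * (k + 4 * 2 ^ k) := by
    calc ∑ v ∈ W, G.degree v ≤ ∑ _v ∈ W, (k + 4 * 2 ^ k) := by
          apply Finset.sum_le_sum
          intro v _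
          have := G.degree_lt_card_verts v
          omega
      _ = W.card * (k + 4 * 2 ^ k) := by rw [Finset.sum_const, smul_eq_mul]
      _ ≤ k * (k + 4 * 2 ^ k) := Nat.mul_le_mul_right _ hWcard
  -- bound on sum over complement of W
  have hout : ∑ v ∈ Wᶜ, G.degree v ≤ 4 * (k * 2 ^ (k - 1)) := by
    have hdeg : ∀ v ∈ Wᶜ, G.degree v = (f v).card := fun v _ => rfl
    calc ∑ v ∈ Wᶜ, G.degree v = ∑ v ∈ Wᶜ, (f v).card := Finset.sum_congr rfl hdeg
      _ = ∑ S ∈ Wᶜ.image f, (Wᶜ.filter (fun v => f v = S)).card • S.card :=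
          Finset.sum_comp (fun S : Finset V => S.card) f
      _ ≤ ∑ S ∈ Wᶜ.image f, 4 * S.card := by
          apply Finset.sum_le_sum
          intro S _
          rw [smul_eq_mul]
          exact Nat.mul_le_mul_right _ (hfiber S)
      _ ≤ ∑ S ∈ W.powerset, 4 * S.card := by
          apply Finset.sum_le_sum_of_subset
          intro S hS
          rw [Finset.mem_image] at hS
          obtain ⟨v, hv, rfl⟩ := hS
          exact hmaps v hv
      _ = 4 * (W.card * 2 ^ (W.card - 1)) := by
          rw [← Finset.mul_sum, sum_card_powerset']
      _ ≤ 4 * (k * 2 ^ (k - 1)) := by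
          apply Nat.mul_le_mul_left
          apply Nat.mul_le_mul hWcard
          exact Nat.pow_le_pow_right (by norm_num) (by omega)
  -- put everything together
  have hkey : 2 * G.edgeFinset.card ≤ k * (k + 4 * 2 ^ k) + 4 * (k * 2 ^ (k - 1)) := by
    rw [← hsum, hsplit]
    exact Nat.add_le_add hW hout
  have hk2 : k ≤ 2 ^ k := (Nat.lt_two_pow_self (n := k)).le
  have hpow : 4 * (k * 2 ^ (k - 1)) ≤ 2 * (k * 2 ^ k) := by
    cases k with
    | zero => simp
    | succ n =>
      have : (n + 1) - 1 = n := rfl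
      rw [this, pow_succ]
      ring_nf
      omega
  have hfin : k * (k + 4 * 2 ^ k) ≤ 6 * (k * 2 ^ k) := by
    have : k * k ≤ k * 2 ^ k := Nat.mul_le_mul_left k hk2
    calc k * (k + 4 * 2 ^ k) = k * k + 4 * (k * 2 ^ k) := by ring
      _ ≤ k * 2 ^ k + 4 * (k * 2 ^ k) := by omega
      _ ≤ 6 * (k * 2 ^ k) := by omega
  have hm : 4 * k * 2 ^ k = 4 * (k * 2 ^ k) := by ring
  omega
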